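/- Let J, Q be real n×n matrices with Jᵀ = −J and Q positive definite. Then every eigenvalue λ ∈ ℂ of the matrix JQ (viewed as a complex matrix) satisfies Re(λ) = 0, and every eigenvalue of JQ is semisimple, i.e., the generalized eigenspace ker((JQ − λI)ⁿ) over ℂ equals the eigenspace ker(JQ − λI). -/

import Mathlib

open Matrix

/-- The complexification of a real matrix. -/
noncomputable def toC {n : ℕ} (A : Matrix (Fin n) (Fin n) ℝ) : Matrix (Fin n) (Fin n) ℂ :=
  A.map (fun a => (a : ℂ))

lemma toC_mul {n : ℕ} (A B : Matrix (Fin n) (Fin n) ℝ) : toC (A * B) = toC A * toC B := by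
  ext i j
  simp [toC, Matrix.mul_apply]

lemma toC_conjTranspose {n : ℕ} (A : Matrix (Fin n) (Fin n) ℝ) : (toC A)ᴴ = toC Aᵀ := by
  ext i j
  simp [toC, conjTranspose_apply]

lemma toC_re_dot {n : ℕ} (Q : Matrix (Fin n) (Fin n) ℝ) (v : Fin n → ℂ) :
    (star v ⬝ᵥ (toC Q *ᵥ v)).re =
      (fun i => (v i).re) ⬝ᵥ Q *ᵥ (fun i => (v i).re)
        + (fun i => (v i).im) ⬝ᵥ Q *ᵥ (fun i => (v i).im) := by
  simp only [dotProduct, mulVec, toC, Matrix.map_apply, Pi.star_apply, Finset.mul_sum,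
    Complex.re_sum, ← Finset.sum_add_distrib]
  refine Finset.sum_congr rfl fun i _ => Finset.sum_congr rfl fun j _ => ?_
  simp [Complex.mul_re, RCLike.star_def, Complex.conj_re, Complex.conj_im]

lemma toC_dot_ne {n : ℕ} {Q : Matrix (Fin n) (Fin n) ℝ} (hQ : Q.PosDef)
    {v : Fin n → ℂ} (hv : v ≠ 0) : star v ⬝ᵥ (toC Q *ᵥ v) ≠ 0 := by
  intro h
  have hre : (star v ⬝ᵥ (toC Q *ᵥ v)).re = 0 := by rw [h]; simp
  rw [toC_re_dot] at hre
  set a : Fin n → ℝ := fun i => (v i).re with ha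
  set b : Fin n → ℝ := fun i => (v i).im with hb
  have hab : a ≠ 0 ∨ b ≠ 0 := by
    by_contra hc
    push_neg at hc
    apply hv
    funext i
    have h1 : a i = 0 := by rw [hc.1]; rfl
    have h2 : b i = 0 := by rw [hc.2]; rfl
    exact Complex.ext h1 h2
  have hQa : 0 ≤ a ⬝ᵥ Q *ᵥ a := by
    by_cases h0 : a = 0
    · simp [h0]
    · exact le_of_lt (by simpa using hQ.dotProduct_mulVec_pos h0)
  have hQb : 0 ≤ b ⬝ᵥ Q *ᵥ b := by
    by_cases h0 : b = 0
    · simp [h0]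
    · exact le_of_lt (by simpa using hQ.dotProduct_mulVec_pos h0)
  rcases hab with h0 | h0
  · have := hQ.dotProduct_mulVec_pos h0
    simp only [star_trivial] at this
    linarith
  · have := hQ.dotProduct_mulVec_pos h0
    simp only [star_trivial] at this
    linarith

theorem JQ_eigenvalues_imaginary_semisimple {n : ℕ} (J Q : Matrix (Fin n) (Fin n) ℝ)
    (hJ : Jᵀ = -J) (hQ : Q.PosDef) (μ : ℂ)
    (heig : ∃ x : Fin n → ℂ, x ≠ 0 ∧ toC (J * Q) *ᵥ x = μ • x) :
    μ.re = 0 ∧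
      ∀ x : Fin n → ℂ, ((toC (J * Q) - μ • 1) ^ n) *ᵥ x = 0 ↔ (toC (J * Q) - μ • 1) *ᵥ x = 0 := by
  set A : Matrix (Fin n) (Fin n) ℂ := toC (J * Q) with hA
  set B : Matrix (Fin n) (Fin n) ℂ := toC Q with hB
  -- skew-adjointness of A w.r.t. the B-form: Aᴴ * B = -(B * A)
  have hQsym : Qᵀ = Q := by
    have := hQ.1
    rw [Matrix.IsHermitian, conjTranspose_eq_transpose_of_trivial] at this; exact this
  have hAH : Aᴴ * B = -(B * A) := by
    have h1 : Aᴴ = -(B * toC J) := by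
      rw [hA, toC_mul, conjTranspose_mul, toC_conjTranspose, toC_conjTranspose, hJ, hQsym]
      have hneg : toC (-J) = -(toC J) := by ext i j; simp [toC]
      rw [hneg, mul_neg, hB]
    rw [h1, hA, toC_mul]
    simp [Matrix.mul_assoc, hB]
  -- vector form of skew-adjointness
  have skew : ∀ u w : Fin n → ℂ,
      star u ⬝ᵥ (B *ᵥ (A *ᵥ w)) = -(star (A *ᵥ u) ⬝ᵥ (B *ᵥ w)) := by
    intro u w
    rw [star_mulVec, ← Matrix.dotProduct_mulVec, Matrix.mulVec_mulVec, Matrix.mulVec_mulVec,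
      hAH, Matrix.neg_mulVec]
    simp
  -- part 1: Re μ = 0
  obtain ⟨x, hx0, hxe⟩ := heig
  have hc : star x ⬝ᵥ (B *ᵥ x) ≠ 0 := toC_dot_ne hQ hx0
  have key : μ * (star x ⬝ᵥ (B *ᵥ x)) = -((starRingEnd ℂ) μ * (star x ⬝ᵥ (B *ᵥ x))) := by
    have h1 := skew x x
    rw [hxe] at h1
    simpa [Matrix.mulVec_smul, dotProduct_smul, star_smul, smul_dotProduct,
      smul_eq_mul, mul_comm] using h1
  have hμ : μ + (starRingEnd ℂ) μ = 0 := by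
    have : (μ + (starRingEnd ℂ) μ) * (star x ⬝ᵥ (B *ᵥ x)) = 0 := by
      rw [add_mul, key]; ring
    rcases mul_eq_zero.mp this with h | h
    · exact h
    · exact absurd h hc
  have hre : μ.re = 0 := by
    have := congrArg Complex.re hμ
    simp [Complex.add_re, Complex.conj_re] at this
    linarith
  refine ⟨hre, ?_⟩
  -- part 2: semisimplicity
  set M : Matrix (Fin n) (Fin n) ℂ := A - μ • 1 with hM
  -- key step: M (M x) = 0 → M x = 0
  have step : ∀ z : Fin n → ℂ, M *ᵥ (M *ᵥ z) = 0 → M *ᵥ z = 0 := by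
    intro z hz
    set y : Fin n → ℂ := M *ᵥ z with hy
    have hAy : A *ᵥ y = μ • y := by
      have : A *ᵥ y - μ • y = 0 := by
        have : M *ᵥ y = 0 := hz
        simpa [hM, Matrix.sub_mulVec, Matrix.smul_mulVec, Matrix.one_mulVec] using this
      linear_combination (norm := module) this
    by_contra hy0
    have hyne : y ≠ 0 := fun h => hy0 (by rw [hy] at h; exact h)
    apply toC_dot_ne hQ hyne
    -- ⟨y, B y⟩ = ⟨y, B (A z - μ z)⟩ = -conj μ ⟨y,Bz⟩ - μ ⟨y,Bz⟩ = 0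
    have hyz : y = A *ᵥ z - μ • z := by
      rw [hy, hM]
      simp [Matrix.sub_mulVec, Matrix.smul_mulVec, Matrix.one_mulVec]
    calc star y ⬝ᵥ (B *ᵥ y)
        = star y ⬝ᵥ (B *ᵥ (A *ᵥ z)) - μ * (star y ⬝ᵥ (B *ᵥ z)) := by
          rw [hyz]
          simp [Matrix.mulVec_sub, Matrix.mulVec_smul, dotProduct_sub, dotProduct_smul,
            smul_eq_mul]
      _ = -((starRingEnd ℂ) μ) * (star y ⬝ᵥ (B *ᵥ z)) - μ * (star y ⬝ᵥ (B *ᵥ z)) := by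
          rw [skew y z, hAy]
          simp [star_smul, smul_dotProduct, smul_eq_mul]
      _ = -((μ + (starRingEnd ℂ) μ) * (star y ⬝ᵥ (B *ᵥ z))) := by ring
      _ = 0 := by rw [hμ]; simp
  -- iterate: M^(k+1) x = 0 → M x = 0
  have iter : ∀ k : ℕ, ∀ z : Fin n → ℂ, (M ^ (k + 1)) *ᵥ z = 0 → M *ᵥ z = 0 := by
    intro k
    induction k with
    | zero => intro z hz; simpa using hz
    | succ k ih =>
      intro z hz
      have h1 : (M ^ (k + 1)) *ᵥ (M *ᵥ z) = 0 := by
        rw [Matrix.mulVec_mulVec, ← pow_succ]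
        exact hz
      exact step z (ih (M *ᵥ z) h1)
  intro x
  cases n with
  | zero =>
    constructor <;> intro _ <;> exact Subsingleton.elim _ _
  | succ k =>
    constructor
    · exact iter k x
    · intro hx
      rw [pow_succ, ← Matrix.mulVec_mulVec, hx, Matrix.mulVec_zero]
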